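/- There exists an AP₃-covering sequence A ⊆ ℕ such that liminf_{n→∞} A(n)/√n ≤ 2. -/

import Mathlib

/-- Counting function: number of elements of `A` that are at most `n`. -/
noncomputable def countUpTo (A : Set ℕ) (n : ℕ) : ℕ := (A ∩ Set.Iic n).ncard

/-- `A` is an AP₃-covering sequence. -/
def AP3Covering (A : Set ℕ) : Prop :=
  ∃ n₀ : ℕ, ∀ n > n₀, ∃ a ∈ A, ∃ b ∈ A, a < b ∧ b < n ∧ 2 * b = a + n

namespace AP3Aux

/-- the doubly exponential scale sequence -/
def qq (k : ℕ) : ℕ := 16 ^ (2 ^ k)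

lemma qq_succ (k : ℕ) : qq (k + 1) = qq k * qq k := by
  unfold qq
  rw [pow_succ, pow_mul, pow_two]

lemma qq_ge16 (k : ℕ) : 16 ≤ qq k := by
  have h : (16 : ℕ) ^ 1 ≤ 16 ^ (2 ^ k) :=
    Nat.pow_le_pow_right (by norm_num) (Nat.one_le_two_pow)
  simpa [qq] using h

lemma qq_mono : Monotone qq := fun a b h =>
  Nat.pow_le_pow_right (by norm_num) (Nat.pow_le_pow_right (by norm_num) h)

lemma qq_even (k : ℕ) : 2 ∣ qq k :=
  dvd_pow (by norm_num : (2:ℕ) ∣ 16) (by positivity : 0 < 2 ^ k).ne'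

lemma qq_ge_sq (k : ℕ) : k * k ≤ qq k := by
  have h1 : k ≤ 4 ^ (2 ^ k) := by
    calc k ≤ 2 ^ k := Nat.le_of_lt ((Nat.lt_two_pow_self (n := k)))
    _ ≤ 2 ^ (2 ^ k) := Nat.pow_le_pow_right (by norm_num) (Nat.le_of_lt ((Nat.lt_two_pow_self (n := k))))
    _ ≤ 4 ^ (2 ^ k) := Nat.pow_le_pow_left (by norm_num) _
  have h2 : qq k = 4 ^ (2 ^ k) * 4 ^ (2 ^ k) := by
    unfold qq
    rw [← mul_pow]
    norm_num
  rw [h2]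
  exact Nat.mul_le_mul h1 h1

/-- half of `qq (k+1)` -/
def hh (k : ℕ) : ℕ := qq (k + 1) / 2

lemma two_hh (k : ℕ) : 2 * hh k = qq (k + 1) := Nat.mul_div_cancel' (qq_even (k+1))

lemma hh_ge (k : ℕ) : 128 ≤ hh k := by
  have h1 : 256 ≤ qq (k + 1) := by
    rw [qq_succ]
    calc (256 : ℕ) = 16 * 16 := by norm_num
    _ ≤ qq k * qq k := Nat.mul_le_mul (qq_ge16 k) (qq_ge16 k)
  have h2 := two_hh k
  omega

/-- modulus of the sparse progression at scale k -/
def mB (k : ℕ) : ℕ := hh k - 1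

/-- upper end of the sparse progression at scale k -/
def BB (k : ℕ) : ℕ := 2 * (hh k * hh k) + 2 * hh k + 1

lemma qq_sq2 (k : ℕ) : qq (k + 2) = 4 * (hh k * hh k) := by
  have h := two_hh k
  have : qq (k + 2) = qq (k+1) * qq (k+1) := qq_succ (k+1)
  rw [this, ← h]
  ring

/-- the block of A at scale k : a full interval plus a sparse AP -/
def blk (k : ℕ) : Finset ℕ :=
  Finset.Ioc (qq (k + 1)) (2 * qq (k + 1)) ∪
    (Finset.Ioc (2 * qq (k + 1)) (BB k)).filter (fun x => mB k ∣ x)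

/-- The covering set. -/
def AA : Set ℕ := ⋃ k, (blk k : Set ℕ)

lemma lb_blk (j x : ℕ) (hx : x ∈ blk j) : qq (j + 1) < x := by
  have hq := qq_ge16 (j + 1)
  rcases Finset.mem_union.mp hx with h | h
  · exact (Finset.mem_Ioc.mp h).1
  · have h' := (Finset.mem_Ioc.mp (Finset.mem_filter.mp h).1).1
    omega

/-- Scale `k` covers all `n` in `[qq(k+1)+3, qq(k+2)+2]`. -/
lemma cover (k n : ℕ) (h1 : qq (k + 1) + 3 ≤ n) (h2 : n ≤ qq (k + 2) + 2) :
    ∃ a ∈ blk k, ∃ b ∈ blk k, a < b ∧ b < n ∧ 2 * b = a + n := by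
  have hph : 2 * hh k = qq (k + 1) := two_hh k
  have hhge : 128 ≤ hh k := hh_ge k
  set p := qq (k + 1) with hp
  by_cases hcase : n ≤ 3 * p - 1
  · -- covered by the interval block
    by_cases hc2 : n ≤ 2 * p
    · refine ⟨n - 2, ?_, n - 1, ?_, by omega, by omega, by omega⟩
      · exact Finset.mem_union_left _ (Finset.mem_Ioc.mpr ⟨by omega, by omega⟩)
      · exact Finset.mem_union_left _ (Finset.mem_Ioc.mpr ⟨by omega, by omega⟩)
    · refine ⟨4 * p - n, ?_, 2 * p, ?_, by omega, by omega, by omega⟩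
      · exact Finset.mem_union_left _ (Finset.mem_Ioc.mpr ⟨by omega, by omega⟩)
      · exact Finset.mem_union_left _ (Finset.mem_Ioc.mpr ⟨by omega, by omega⟩)
  · -- covered by the gadget (interval + sparse AP)
    have hn3 : 3 * p ≤ n := by omega
    set m := mB k with hm
    have hm' : m = hh k - 1 := rfl
    set d := 2 * m with hd
    set j := (n + p + d) / d with hj
    set r := (n + p + d) % d with hr
    have e : d * j + r = n + p + d := Nat.div_add_mod _ _
    have hrlt : r < d := Nat.mod_lt _ (by omega)
    have hq2 : qq (k + 2) = 4 * (hh k * hh k) := qq_sq2 k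
    set s := hh k * hh k with hs
    set b := m * j with hb
    have hb2 : 2 * b = d * j := by rw [hb, hd]; ring
    set t := d * j with ht
    refine ⟨2 * b - n, ?_, b, ?_, by omega, by omega, by omega⟩
    · exact Finset.mem_union_left _ (Finset.mem_Ioc.mpr ⟨by omega, by omega⟩)
    · refine Finset.mem_union_right _ (Finset.mem_filter.mpr
        ⟨Finset.mem_Ioc.mpr ⟨by omega, ?_⟩, dvd_mul_right m j⟩)
      show b ≤ BB k
      have hBB : BB k = 2 * s + 2 * hh k + 1 := rfl
      omega

lemma AA_covering : AP3Covering AA := by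
  classical
  refine ⟨qq 1 + 2, fun n hn => ?_⟩
  have hex : ∃ j, n < qq (j + 2) + 3 := by
    refine ⟨n, ?_⟩
    have h1 := qq_ge_sq (n + 2)
    have h2 : n + 2 ≤ (n + 2) * (n + 2) := Nat.le_mul_of_pos_left _ (by omega)
    omega
  have hk1 : qq (Nat.find hex + 1) + 3 ≤ n := by
    rcases Nat.eq_zero_or_pos (Nat.find hex) with h0 | h0
    · rw [h0]
      have he : qq (0 + 1) = qq 1 := rfl
      omega
    · have hmin := Nat.find_min hex (m := Nat.find hex - 1) (by omega)
      have hkk : Nat.find hex - 1 + 2 = Nat.find hex + 1 := by omega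
      rw [hkk] at hmin
      omega
  have hk2 : n ≤ qq (Nat.find hex + 2) + 2 := by
    have := Nat.find_spec hex
    omega
  obtain ⟨a, ha, b, hb, hab⟩ := cover (Nat.find hex) n hk1 hk2
  exact ⟨a, Set.mem_iUnion.mpr ⟨Nat.find hex, ha⟩, b,
    Set.mem_iUnion.mpr ⟨Nat.find hex, hb⟩, hab⟩

lemma card_blk (k : ℕ) : (blk k).card ≤ 2 * qq (k + 1) + 5 := by
  have hph : 2 * hh k = qq (k + 1) := two_hh k
  have hhge : 128 ≤ hh k := hh_ge k
  have hmpos : 0 < mB k := by unfold mB; omega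
  have h1 : (Finset.Ioc (qq (k + 1)) (2 * qq (k + 1))).card = qq (k + 1) := by
    rw [Nat.card_Ioc]; omega
  have hBle : BB k ≤ mB k * (2 * hh k + 5) := by
    obtain ⟨g, hg⟩ : ∃ g, hh k = g + 1 := ⟨hh k - 1, by omega⟩
    have hg' : 127 ≤ g := by omega
    unfold BB mB
    rw [hg]
    simp only [Nat.add_sub_cancel]
    nlinarith
  have h2 : ((Finset.Ioc (2 * qq (k + 1)) (BB k)).filter (fun x => mB k ∣ x)).card
      ≤ qq (k + 1) + 5 := by
    have hcard : (Finset.Icc 1 (2 * hh k + 5)).card = 2 * hh k + 5 := by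
      rw [Nat.card_Icc]
      omega
    calc ((Finset.Ioc (2 * qq (k + 1)) (BB k)).filter (fun x => mB k ∣ x)).card
        ≤ (Finset.Icc 1 (2 * hh k + 5)).card := by
          apply Finset.card_le_card_of_injOn (fun x => x / mB k)
          · intro x hx
            obtain ⟨hxI, hxd⟩ := Finset.mem_filter.mp hx
            obtain ⟨hxl, hxu⟩ := Finset.mem_Ioc.mp hxI
            refine Finset.mem_Icc.mpr ⟨?_, ?_⟩
            · rw [Nat.one_le_div_iff hmpos]
              have : mB k ≤ hh k := by unfold mB; omega
              omega
            · have hx' : x ≤ mB k * (2 * hh k + 5) := le_trans hxu hBle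
              calc x / mB k ≤ mB k * (2 * hh k + 5) / mB k := Nat.div_le_div_right hx'
              _ = 2 * hh k + 5 := Nat.mul_div_cancel_left _ hmpos
          · intro x hx y hy hxy
            simp only [Finset.coe_filter, Set.mem_setOf_eq] at hx hy
            have hx' : mB k * (x / mB k) = x := Nat.mul_div_cancel' hx.2
            have hy' : mB k * (y / mB k) = y := Nat.mul_div_cancel' hy.2
            have hxy' : x / mB k = y / mB k := hxy
            rw [← hx', ← hy', hxy']
      _ = 2 * hh k + 5 := hcard
      _ = qq (k + 1) + 5 := by omega
  calc (blk k).card ≤ _ + _ := Finset.card_union_le _ _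
  _ ≤ 2 * qq (k + 1) + 5 := by omega

lemma count_bound (k : ℕ) :
    countUpTo AA (qq (k + 2)) ≤ 2 * qq (k + 1) + 5 + k * (2 * qq k + 5) := by
  have hsub : AA ∩ Set.Iic (qq (k + 2)) ⊆ ↑((Finset.range (k + 1)).biUnion blk) := by
    rintro x ⟨hx, hxle⟩
    rw [Set.mem_Iic] at hxle
    obtain ⟨S, ⟨j, hS⟩, hxS⟩ := hx
    have hj : x ∈ blk j := by
      rw [← hS] at hxS
      exact hxS
    by_cases hjk : j ≤ k
    · exact Finset.mem_coe.mpr (Finset.mem_biUnion.mpr ⟨j, Finset.mem_range.mpr (by omega), hj⟩)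
    · exfalso
      have hlb : qq (j + 1) < x := lb_blk j x hj
      have hmono : qq (k + 2) ≤ qq (j + 1) := qq_mono (by omega)
      omega
  have h1 := Set.ncard_le_ncard hsub (Finset.finite_toSet _)
  rw [Set.ncard_coe_finset] at h1
  refine le_trans h1 (le_trans (Finset.card_biUnion_le) ?_)
  rw [Finset.sum_range_succ]
  have hrest : ∑ j ∈ Finset.range k, (blk j).card ≤ k * (2 * qq k + 5) := by
    have hb : ∀ j ∈ Finset.range k, (blk j).card ≤ 2 * qq k + 5 := by
      intro j hj
      have hjk : j + 1 ≤ k := Finset.mem_range.mp hj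
      have := card_blk j
      have hmono : qq (j + 1) ≤ qq k := qq_mono hjk
      omega
    calc ∑ j ∈ Finset.range k, (blk j).card ≤ (Finset.range k).card • (2 * qq k + 5) :=
      Finset.sum_le_card_nsmul _ _ _ hb
    _ = k * (2 * qq k + 5) := by simp [Finset.card_range]
  have hlast := card_blk k
  omega

end AP3Aux

theorem stmt_4 :
    ∃ A : Set ℕ, AP3Covering A ∧
      Filter.liminf (fun n : ℕ => (countUpTo A n : ℝ) / Real.sqrt n) Filter.atTop ≤ 2 := by
  classical
  refine ⟨AP3Aux.AA, AP3Aux.AA_covering, ?_⟩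
  have hge0 : ∀ n : ℕ, (0:ℝ) ≤ (countUpTo AP3Aux.AA n : ℝ) / Real.sqrt n :=
    fun n => div_nonneg (Nat.cast_nonneg _) (Real.sqrt_nonneg _)
  refine le_of_forall_gt_imp_ge_of_dense ?_
  intro c hc
  refine Filter.liminf_le_of_frequently_le ?_ (Filter.isBoundedUnder_of ⟨0, fun n => hge0 n⟩)
  rw [Filter.frequently_atTop]
  intro N
  set ε : ℝ := c - 2 with hε
  have hεpos : 0 < ε := by rw [hε]; linarith
  set k : ℕ := max N ⌈(4:ℝ)/ε⌉₊ + 1 with hk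
  have hk1 : 1 ≤ k := by omega
  refine ⟨AP3Aux.qq (k + 2), ?_, ?_⟩
  · -- qq (k+2) ≥ N
    have h1 := AP3Aux.qq_ge_sq (k + 2)
    have h2 : k + 2 ≤ (k + 2) * (k + 2) := Nat.le_mul_of_pos_left _ (by omega)
    omega
  · -- the ratio bound
    have hcount := AP3Aux.count_bound k
    have h16 := AP3Aux.qq_ge16 k
    -- simplify count bound
    have hstep : countUpTo AP3Aux.AA (AP3Aux.qq (k + 2))
        ≤ 2 * AP3Aux.qq (k + 1) + 4 * (k * AP3Aux.qq k) := by
      have e1 : k * (2 * AP3Aux.qq k + 5) = 2 * (k * AP3Aux.qq k) + 5 * k := by ring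
      have ht : 16 * k ≤ k * AP3Aux.qq k := by
        calc 16 * k = k * 16 := by ring
        _ ≤ k * AP3Aux.qq k := Nat.mul_le_mul_left k h16
      omega
    -- sqrt computation
    have hq2cast : ((AP3Aux.qq (k + 2) : ℕ) : ℝ) = ((AP3Aux.qq (k + 1) : ℝ)) ^ 2 := by
      rw [AP3Aux.qq_succ (k + 1)]
      push_cast
      ring
    have hsqrt : Real.sqrt ((AP3Aux.qq (k + 2) : ℕ) : ℝ) = (AP3Aux.qq (k + 1) : ℝ) := by
      rw [hq2cast, Real.sqrt_sq (by positivity)]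
    have hqpos : (0:ℝ) < (AP3Aux.qq (k + 1) : ℝ) := by
      have := AP3Aux.qq_ge16 (k + 1)
      positivity
    show (countUpTo AP3Aux.AA (AP3Aux.qq (k + 2)) : ℝ) / Real.sqrt (AP3Aux.qq (k + 2)) ≤ c
    rw [hsqrt, div_le_iff₀ hqpos]
    have hcastcount : (countUpTo AP3Aux.AA (AP3Aux.qq (k + 2)) : ℝ)
        ≤ 2 * (AP3Aux.qq (k + 1) : ℝ) + 4 * ((k : ℝ) * (AP3Aux.qq k : ℝ)) := by
      exact_mod_cast hstep
    have hkε : (4:ℝ) ≤ ε * k := by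
      have h1 : ((4:ℝ)/ε) ≤ (⌈(4:ℝ)/ε⌉₊ : ℝ) := Nat.le_ceil _
      have h2 : (⌈(4:ℝ)/ε⌉₊ : ℝ) ≤ (k : ℝ) := by
        have : ⌈(4:ℝ)/ε⌉₊ ≤ k := by omega
        exact_mod_cast this
      have h3 : (4:ℝ)/ε ≤ (k : ℝ) := le_trans h1 h2
      calc (4:ℝ) = (4/ε) * ε := by field_simp
      _ ≤ (k:ℝ) * ε := mul_le_mul_of_nonneg_right h3 hεpos.le
      _ = ε * k := mul_comm _ _
    have hq2' : (AP3Aux.qq (k + 1) : ℝ) = (AP3Aux.qq k : ℝ) * (AP3Aux.qq k : ℝ) := by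
      exact_mod_cast AP3Aux.qq_succ k
    have hqk_sq : ((k:ℝ)) * (k:ℝ) ≤ (AP3Aux.qq k : ℝ) := by exact_mod_cast AP3Aux.qq_ge_sq k
    have hQk0 : (0:ℝ) ≤ (AP3Aux.qq k : ℝ) := Nat.cast_nonneg _
    have hk0 : (0:ℝ) ≤ (k:ℝ) := Nat.cast_nonneg _
    have key : 4 * ((k:ℝ) * (AP3Aux.qq k : ℝ)) ≤ ε * ((AP3Aux.qq k : ℝ) * (AP3Aux.qq k : ℝ)) := by
      nlinarith [mul_nonneg hk0 hQk0, mul_nonneg hεpos.le hQk0, hkε, hqk_sq]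
    have hc' : c = 2 + ε := by rw [hε]; ring
    calc (countUpTo AP3Aux.AA (AP3Aux.qq (k + 2)) : ℝ)
        ≤ 2 * (AP3Aux.qq (k + 1) : ℝ) + 4 * ((k : ℝ) * (AP3Aux.qq k : ℝ)) := hcastcount
    _ ≤ 2 * (AP3Aux.qq (k + 1) : ℝ) + ε * ((AP3Aux.qq k : ℝ) * (AP3Aux.qq k : ℝ)) := by
        linarith
    _ = (2 + ε) * (AP3Aux.qq (k + 1) : ℝ) := by rw [hq2']; ring
    _ = c * (AP3Aux.qq (k + 1) : ℝ) := by rw [hc']
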